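/- arXiv:1408.2277 — 2 statements merged into one kernel-verified Lean document; each statement's English description precedes it below -/
import Mathlib

section
/- The sequence (i_n)_{n ≥ 0} contains no 5th powers: there do not exist a natural number p and a positive integer ℓ such that i_{p+j+ℓ} = i_{p+j} for all 0 ≤ j < 4ℓ. -/
open Finset

/-- `inv2 n` is the number of inversions in the binary representation of `n`,
i.e. the number of pairs of bit positions `a > b` such that bit `a` of `n` is `1`
and bit `b` of `n` is `0`. -/
def inv2 (n : ℕ) : ℕ :=
  ((Finset.range (n + 1) ×ˢ Finset.range (n + 1)).filter
    (fun p => p.2 < p.1 ∧ n.testBit p.1 = true ∧ n.testBit p.2 = false)).card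

def invN (N n : ℕ) : ℕ :=
  ∑ a ∈ range N, ∑ b ∈ range N,
    if (b < a ∧ n.testBit a = true ∧ n.testBit b = false) then 1 else 0

def onesN (N n : ℕ) : ℕ := ∑ a ∈ range N, if n.testBit a = true then 1 else 0

def onesC (n : ℕ) : ℕ := onesN (n+1) n

lemma testBit_false_of_le {n a : ℕ} (h : n < a) : n.testBit a = false :=
  Nat.testBit_lt_two_pow (h.trans_le (Nat.lt_two_pow_self (n := a)).le)

lemma inv2_eq_invN (n : ℕ) : inv2 n = invN (n+1) n := by
  rw [inv2, Finset.card_filter, Finset.sum_product, invN]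

lemma invN_stable {N M n : ℕ} (hn : n < N) (hNM : N ≤ M) : invN N n = invN M n := by
  unfold invN
  have hinner : ∀ a ∈ range N,
      (∑ b ∈ range N, if (b < a ∧ n.testBit a = true ∧ n.testBit b = false) then 1 else 0)
      = ∑ b ∈ range M, if (b < a ∧ n.testBit a = true ∧ n.testBit b = false) then 1 else 0 := by
    intro a ha
    apply Finset.sum_subset (Finset.range_subset_range.mpr hNM)
    intro b hb hb'
    simp only [Finset.mem_range, not_lt] at ha hb hb'
    have : ¬ b < a := by omega
    simp [this]
  rw [Finset.sum_congr rfl hinner]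
  apply Finset.sum_subset (Finset.range_subset_range.mpr hNM)
  intro a ha ha'
  simp only [Finset.mem_range, not_lt] at ha ha'
  have : n.testBit a = false := testBit_false_of_le (by omega)
  simp [this]

lemma onesN_stable {N M n : ℕ} (hn : n < N) (hNM : N ≤ M) : onesN N n = onesN M n := by
  unfold onesN
  apply Finset.sum_subset (Finset.range_subset_range.mpr hNM)
  intro a ha ha'
  simp only [Finset.mem_range, not_lt] at ha ha'
  have : n.testBit a = false := testBit_false_of_le (by omega)
  simp [this]

lemma testBit_odd_zero (n : ℕ) : (2*n+1).testBit 0 = true := by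
  rw [Nat.testBit_zero]
  simp [Nat.add_mul_mod_self_left, Nat.mul_add_mod]

lemma testBit_even_zero (n : ℕ) : (2*n).testBit 0 = false := by
  rw [Nat.testBit_zero]
  simp [Nat.mul_mod_right]

lemma testBit_odd_succ (n a : ℕ) : (2*n+1).testBit (a+1) = n.testBit a := by
  rw [Nat.testBit_succ]
  congr 1
  omega

lemma testBit_even_succ (n a : ℕ) : (2*n).testBit (a+1) = n.testBit a := by
  rw [Nat.testBit_succ]
  congr 1
  omega

lemma inv2_odd (n : ℕ) : inv2 (2*n+1) = inv2 n := by
  rw [inv2_eq_invN, inv2_eq_invN, invN_stable (Nat.lt_succ_self n) (show n+1 ≤ 2*n+1 by omega)]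
  unfold invN
  have inner : ∀ a, (∑ b ∈ range (2*n+1+1),
      if (b < a ∧ (2*n+1).testBit a = true ∧ (2*n+1).testBit b = false) then 1 else 0)
      = ∑ b ∈ range (2*n+1),
      if (b+1 < a ∧ (2*n+1).testBit a = true ∧ (2*n+1).testBit (b+1) = false) then 1 else 0 := by
    intro a
    rw [Finset.sum_range_succ']
    simp only [testBit_odd_zero]
    norm_num
  rw [Finset.sum_congr rfl (fun a _ => inner a), Finset.sum_range_succ']
  have : (∑ b ∈ range (2*n+1),
      if (b+1 < 0 ∧ (2*n+1).testBit 0 = true ∧ (2*n+1).testBit (b+1) = false) then 1 else 0) = 0 := by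
    apply Finset.sum_eq_zero
    intro b _
    norm_num
  rw [this, add_zero]
  apply Finset.sum_congr rfl
  intro a _
  apply Finset.sum_congr rfl
  intro b _
  simp only [testBit_odd_succ]
  norm_num

lemma inv2_even (n : ℕ) (hn : 1 ≤ n) : inv2 (2*n) = inv2 n + onesC n := by
  rw [inv2_eq_invN, inv2_eq_invN,
    invN_stable (Nat.lt_succ_self n) (show n+1 ≤ 2*n by omega)]
  unfold invN
  have inner : ∀ a, (∑ b ∈ range (2*n+1),
      if (b < a ∧ (2*n).testBit a = true ∧ (2*n).testBit b = false) then 1 else 0)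
      = (∑ b ∈ range (2*n),
      if (b+1 < a ∧ (2*n).testBit a = true ∧ (2*n).testBit (b+1) = false) then 1 else 0)
      + (if (0 < a ∧ (2*n).testBit a = true) then 1 else 0) := by
    intro a
    rw [Finset.sum_range_succ']
    congr 1
    simp only [testBit_even_zero]
    norm_num
  rw [Finset.sum_congr rfl (fun a _ => inner a), Finset.sum_add_distrib]
  congr 1
  · -- main part
    rw [Finset.sum_range_succ']
    have h0 : (∑ b ∈ range (2*n),
        if (b+1 < 0 ∧ (2*n).testBit 0 = true ∧ (2*n).testBit (b+1) = false) then 1 else 0) = 0 := by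
      apply Finset.sum_eq_zero; intro b _; norm_num
    rw [h0, add_zero]
    apply Finset.sum_congr rfl
    intro a _
    apply Finset.sum_congr rfl
    intro b _
    simp only [testBit_even_succ]
    norm_num
  · -- ones part
    rw [Finset.sum_range_succ']
    have h0 : (if (0 < 0 ∧ (2*n).testBit 0 = true) then 1 else 0) = 0 := by norm_num
    rw [h0, add_zero]
    have : ∀ a, (if (0 < a+1 ∧ (2*n).testBit (a+1) = true) then 1 else 0)
        = if n.testBit a = true then 1 else 0 := by
      intro a
      simp only [testBit_even_succ]
      norm_num
    rw [Finset.sum_congr rfl (fun a _ => this a)]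
    exact (onesN_stable (Nat.lt_succ_self n) (show n+1 ≤ 2*n by omega)).symm

lemma onesC_odd (n : ℕ) : onesC (2*n+1) = onesC n + 1 := by
  unfold onesC onesN
  rw [Finset.sum_range_succ']
  simp only [testBit_odd_succ, testBit_odd_zero]
  congr 1
  exact (onesN_stable (Nat.lt_succ_self n) (show n+1 ≤ 2*n+1 by omega)).symm

lemma onesC_even (n : ℕ) (hn : 1 ≤ n) : onesC (2*n) = onesC n := by
  unfold onesC onesN
  rw [Finset.sum_range_succ']
  simp only [testBit_even_succ, testBit_even_zero]
  have h0 : (if (false = true) then (1:ℕ) else 0) = 0 := rfl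
  rw [h0, add_zero]
  exact (onesN_stable (Nat.lt_succ_self n) (show n+1 ≤ 2*n by omega)).symm

/-- `iSeq n = (-1)^(inv2 n)`. -/
def iSeq (n : ℕ) : ℤ := (-1) ^ inv2 n
def tSeq (n : ℕ) : ℤ := (-1) ^ onesC n

lemma inv2_zero : inv2 0 = 0 := by decide
lemma onesC_zero : onesC 0 = 0 := by decide

lemma tpm (n : ℕ) : tSeq n = 1 ∨ tSeq n = -1 := by
  rcases Nat.even_or_odd (onesC n) with h | h
  · exact Or.inl h.neg_one_pow
  · exact Or.inr h.neg_one_pow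

lemma ipm (n : ℕ) : iSeq n = 1 ∨ iSeq n = -1 := by
  rcases Nat.even_or_odd (inv2 n) with h | h
  · exact Or.inl h.neg_one_pow
  · exact Or.inr h.neg_one_pow

lemma iSeq_odd (n : ℕ) : iSeq (2*n+1) = iSeq n := by
  unfold iSeq; rw [inv2_odd]

lemma iSeq_even (n : ℕ) : iSeq (2*n) = tSeq n * iSeq n := by
  rcases Nat.eq_zero_or_pos n with rfl | hn
  · norm_num [iSeq, tSeq, inv2_zero, onesC_zero]
  · unfold iSeq tSeq; rw [inv2_even n hn, pow_add, mul_comm]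

lemma tSeq_odd (n : ℕ) : tSeq (2*n+1) = -tSeq n := by
  unfold tSeq; rw [onesC_odd, pow_succ]; ring

lemma tSeq_even (n : ℕ) : tSeq (2*n) = tSeq n := by
  rcases Nat.eq_zero_or_pos n with rfl | hn
  · norm_num
  · unfold tSeq; rw [onesC_even n hn]

lemma cancel_right {a x : ℤ} (ha : a = 1 ∨ a = -1) (h : a = x * a) : x = 1 := by
  rcases ha with h' | h' <;> rw [h'] at h <;> linarith

lemma no3 (x : ℕ) (h1 : tSeq x = tSeq (x+1)) (h2 : tSeq (x+1) = tSeq (x+2)) : False := by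
  rcases Nat.even_or_odd x with ⟨s, hs⟩ | ⟨s, hs⟩
  · rw [show x = 2*s by omega] at h1
    rw [tSeq_even, tSeq_odd] at h1
    rcases tpm s with h | h <;> rw [h] at h1 <;> linarith
  · rw [show x+1 = 2*(s+1) by omega, show x+2 = 2*(s+1)+1 by omega] at h2
    rw [tSeq_even, tSeq_odd] at h2
    rcases tpm (s+1) with h | h <;> rw [h] at h2 <;> linarith

lemma main_key : ∀ ℓ, ∀ p, 1 ≤ ℓ →
    (∀ j, j < 4*ℓ → iSeq (p + j + ℓ) = iSeq (p + j)) → False := by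
  intro ℓ
  induction ℓ using Nat.strong_induction_on with
  | _ ℓ IH =>
    intro p hℓ H
    have H' : ∀ n, p ≤ n → n < p + 4*ℓ → iSeq (n + ℓ) = iSeq n := by
      intro n h1 h2
      have := H (n - p) (by omega)
      rwa [show p + (n - p) = n by omega] at this
    rcases Nat.even_or_odd ℓ with ⟨m, hm⟩ | ⟨m, hm⟩
    · -- ℓ = m + m : descent to period m
      have hm1 : 1 ≤ m := by omega
      apply IH m (by omega) (p/2) hm1
      intro j hj
      have := H' (2*(p/2+j)+1) (by omega) (by omega)
      rw [show 2*(p/2+j)+1+ℓ = 2*(p/2+j+m)+1 by omega] at this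
      rw [iSeq_odd, iSeq_odd] at this
      exact this
    · -- ℓ = 2*m+1
      have hEven : ∀ k, p ≤ 2*k → 2*k < p + 4*ℓ → iSeq (k + m) = tSeq k * iSeq k := by
        intro k h1 h2
        have := H' (2*k) h1 h2
        rw [show 2*k + ℓ = 2*(k+m)+1 by omega] at this
        rwa [iSeq_odd, iSeq_even] at this
      have hOdd : ∀ k, p ≤ 2*k+1 → 2*k+1 < p + 4*ℓ →
          tSeq (k+m+1) * iSeq (k+m+1) = iSeq k := by
        intro k h1 h2
        have := H' (2*k+1) h1 h2
        rw [show 2*k+1 + ℓ = 2*(k+m+1) by omega] at this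
        rwa [iSeq_even, iSeq_odd] at this
      rcases show m = 0 ∨ m = 1 ∨ 2 ≤ m by omega with rfl | rfl | h2m
      · -- ℓ = 1
        rcases Nat.even_or_odd p with ⟨n, hp⟩ | ⟨n, hp⟩
        · -- p = 2n
          have A1 := H' (2*n) (by omega) (by omega)
          rw [show 2*n + ℓ = 2*n+1 by omega] at A1
          rw [iSeq_odd, iSeq_even] at A1
          have t1 : tSeq n = 1 := cancel_right (ipm n) A1
          have A3 := H' (2*n+2) (by omega) (by omega)
          rw [show 2*n+2 + ℓ = 2*(n+1)+1 by omega, show 2*n+2 = 2*(n+1) by ring] at A3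
          rw [iSeq_odd, iSeq_even] at A3
          have t2 : tSeq (n+1) = 1 := cancel_right (ipm (n+1)) A3
          have A4 := H' (2*n+3) (by omega) (by omega)
          rw [show 2*n+3 + ℓ = 2*(n+2) by omega, show 2*n+3 = 2*(n+1)+1 by ring] at A4
          rw [iSeq_even, iSeq_odd] at A4
          -- A4 : tSeq (n+2) * iSeq (n+2) = iSeq (n+1)
          rcases Nat.even_or_odd n with ⟨s, hs⟩ | ⟨s, hs⟩
          · rw [show n = 2*s by omega, tSeq_even] at t1
            rw [show n+1 = 2*s+1 by omega, tSeq_odd] at t2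
            linarith
          · rw [show n+1 = 2*(s+1) by omega, tSeq_even] at t2
            rw [show n+2 = 2*(s+1)+1 by omega, tSeq_odd, iSeq_odd,
               show n+1 = 2*(s+1) by omega, iSeq_even] at A4
            rw [t2, one_mul] at A4
            rcases ipm (s+1) with h | h <;> rw [h] at A4 <;> norm_num at A4
        · -- p = 2n+1
          have B1 := H' (2*n+1) (by omega) (by omega)
          rw [show 2*n+1 + ℓ = 2*(n+1) by omega] at B1
          rw [iSeq_even, iSeq_odd] at B1
          have B2 := H' (2*n+2) (by omega) (by omega)
          rw [show 2*n+2 + ℓ = 2*(n+1)+1 by omega, show 2*n+2 = 2*(n+1) by ring] at B2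
          rw [iSeq_odd, iSeq_even] at B2
          have t2 : tSeq (n+1) = 1 := cancel_right (ipm (n+1)) B2
          have B4 := H' (2*n+4) (by omega) (by omega)
          rw [show 2*n+4 + ℓ = 2*(n+2)+1 by omega, show 2*n+4 = 2*(n+2) by ring] at B4
          rw [iSeq_odd, iSeq_even] at B4
          have t3 : tSeq (n+2) = 1 := cancel_right (ipm (n+2)) B4
          rcases Nat.even_or_odd n with ⟨s, hs⟩ | ⟨s, hs⟩
          · -- n = 2s
            have B1' : iSeq (n+1) = iSeq n := by rw [t2, one_mul] at B1; exact B1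
            rw [show n+1 = 2*s+1 by omega, tSeq_odd] at t2
            rw [show n+1 = 2*s+1 by omega, iSeq_odd, show n = 2*s by omega,
                iSeq_even] at B1'
            have := cancel_right (ipm s) B1'
            linarith
          · rw [show n+1 = 2*(s+1) by omega, tSeq_even] at t2
            rw [show n+2 = 2*(s+1)+1 by omega, tSeq_odd] at t3
            linarith
      · -- ℓ = 3 (m = 1)
        have key : ∀ s, p ≤ 4*s+1 → 4*s+3 < p + 4*ℓ →
            tSeq s = 1 ∧ tSeq (s+1) = -1 := by
          intro s h1 h2
          have O1 := hEven (2*s+1) (by omega) (by omega)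
          rw [show 2*s+1+1 = 2*(s+1) by ring] at O1
          rw [iSeq_even, iSeq_odd, tSeq_odd] at O1
          -- O1 : tSeq (s+1) * iSeq (s+1) = -tSeq s * iSeq s
          have E2 := hOdd (2*s) (by omega) (by omega)
          rw [show 2*s+1+1 = 2*(s+1) by ring] at E2
          rw [tSeq_even, iSeq_even, iSeq_even] at E2
          -- hoping: E2 : tSeq (s+1) * (tSeq (s+1) * iSeq (s+1)) = tSeq s * iSeq s
          have O2 := hOdd (2*s+1) (by omega) (by omega)
          rw [show 2*s+1+1+1 = 2*(s+1)+1 by ring] at O2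
          rw [tSeq_odd, iSeq_odd, iSeq_odd] at O2
          -- O2 : -tSeq (s+1) * iSeq (s+1) = iSeq s
          rcases tpm s with h1 | h1 <;> rcases tpm (s+1) with h2 | h2 <;>
            rcases ipm s with h3 | h3 <;> rcases ipm (s+1) with h4 | h4 <;>
            simp only [h1, h2, h3, h4, mul_one, one_mul, mul_neg, neg_mul, neg_neg, and_self, true_and] at O1 E2 O2 ⊢ <;> omega
        obtain ⟨k1, k2⟩ := key ((p+2)/4) (by omega) (by omega)
        obtain ⟨k3, k4⟩ := key ((p+2)/4+1) (by omega) (by omega)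
        rw [show (p+2)/4+1 = (p+2)/4 + 1 by rfl] at k3
        linarith
      · -- 2 ≤ m
        have hT : ∀ s, p ≤ 4*s → 4*s + 2 < p + 4*ℓ → tSeq (2*s+m+1) = -1 := by
          intro s h1 h2
          have E1 := hEven (2*s+1) (by omega) (by omega)
          rw [show 2*s+1+m = 2*s+m+1 by ring] at E1
          rw [iSeq_odd, tSeq_odd] at E1
          -- E1 : iSeq (2*s+m+1) = -tSeq s * iSeq s
          have E2 := hOdd (2*s) (by omega) (by omega)
          rw [iSeq_even] at E2
          -- E2 : tSeq (2*s+m+1) * iSeq (2*s+m+1) = tSeq s * iSeq s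
          rw [E1] at E2
          rcases tpm s with h | h <;> rcases ipm s with h' | h' <;>
            rw [h, h'] at E2 <;> norm_num at E2 <;> linarith
        rcases Nat.even_or_odd m with ⟨r, hr⟩ | ⟨r, hr⟩
        · -- m = r + r, r ≥ 1
          have hT' : ∀ s, p ≤ 4*s → 4*s + 2 < p + 4*ℓ → tSeq (s+r) = 1 := by
            intro s h1 h2
            have := hT s h1 h2
            rw [show 2*s+m+1 = 2*(s+r)+1 by omega, tSeq_odd] at this
            linarith
          have k0 := hT' (p/4+1) (by omega) (by omega)
          have k1 := hT' (p/4+1+1) (by omega) (by omega)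
          have k2 := hT' (p/4+1+2) (by omega) (by omega)
          exact no3 (p/4+1+r)
            (by rw [k0, show p/4+1+r+1 = p/4+1+1+r by ring, k1])
            (by rw [show p/4+1+r+1 = p/4+1+1+r by ring, k1,
                    show p/4+1+r+2 = p/4+1+2+r by ring, k2])
        · -- m = 2r+1
          have hT' : ∀ s, p ≤ 4*s → 4*s + 2 < p + 4*ℓ → tSeq (s+r+1) = -1 := by
            intro s h1 h2
            have := hT s h1 h2
            rwa [show 2*s+m+1 = 2*(s+r+1) by omega, tSeq_even] at this
          have k0 := hT' (p/4+1) (by omega) (by omega)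
          have k1 := hT' (p/4+1+1) (by omega) (by omega)
          have k2 := hT' (p/4+1+2) (by omega) (by omega)
          exact no3 (p/4+1+r+1)
            (by rw [k0, show p/4+1+r+1+1 = p/4+1+1+r+1 by ring, k1])
            (by rw [show p/4+1+r+1+1 = p/4+1+1+r+1 by ring, k1,
                    show p/4+1+r+1+2 = p/4+1+2+r+1 by ring, k2])

theorem no_fifth_powers :
    ¬ ∃ (p ℓ : ℕ), 1 ≤ ℓ ∧ ∀ j < 4 * ℓ, iSeq (p + j + ℓ) = iSeq (p + j) := by
  rintro ⟨p, ℓ, hℓ, H⟩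
  exact main_key ℓ p hℓ (fun j hj => H j hj)
end

section
/- The sequence (i_n)_{n ≥ 0} contains a cube of period ℓ (i.e., there exists a position p with i_{p+j+ℓ} = i_{p+j} for all 0 ≤ j < 2ℓ) if and only if ℓ = 3. -/
def ones : ℕ → ℕ
  | 0 => 0
  | n + 1 => ones ((n + 1) / 2) + (n + 1) % 2
  decreasing_by exact Nat.div_lt_self (Nat.succ_pos n) one_lt_two

lemma ones_div2 (n : ℕ) : ones n = ones (n / 2) + n % 2 := by
  cases n with
  | zero => simp [ones]
  | succ m => rw [ones]

lemma ones_two_mul (n : ℕ) : ones (2 * n) = ones n := by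
  rw [ones_div2 (2 * n)]
  have h1 : 2 * n / 2 = n := by omega
  have h2 : 2 * n % 2 = 0 := by omega
  rw [h1, h2]
  omega

lemma ones_two_mul_add_one (n : ℕ) : ones (2 * n + 1) = ones n + 1 := by
  rw [ones_div2 (2 * n + 1)]
  have h1 : (2 * n + 1) / 2 = n := by omega
  have h2 : (2 * n + 1) % 2 = 1 := by omega
  rw [h1, h2]

lemma card_testBit : ∀ (N n : ℕ), n < 2 ^ N →
    ((Finset.range N).filter (fun c => n.testBit c = true)).card = ones n := by
  intro N
  induction N with
  | zero =>
    intro n h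
    interval_cases n
    simp [ones]
  | succ N ih =>
    intro n h
    rw [Finset.card_filter, Finset.sum_range_succ']
    have e1 : ∀ i, (if n.testBit (i + 1) = true then (1:ℕ) else 0)
        = (if (n / 2).testBit i = true then 1 else 0) := by
      intro i; rw [Nat.testBit_add_one]
    simp only [e1]
    rw [← Finset.card_filter, ih (n / 2) (by
      have : 2 ^ (N + 1) = 2 ^ N * 2 := by ring
      omega)]
    rw [ones_div2 n]
    have e2 : (if n.testBit 0 = true then (1:ℕ) else 0) = n % 2 := by
      rcases Nat.mod_two_eq_zero_or_one n with h2 | h2 <;>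
        simp [Nat.testBit_zero, h2]
    omega

-- range independence
lemma inv2_eq_card (n N : ℕ) (h : n < N) :
    inv2 n = ((Finset.range N ×ˢ Finset.range N).filter
      (fun p => p.2 < p.1 ∧ n.testBit p.1 = true ∧ n.testBit p.2 = false)).card := by
  unfold inv2
  congr 1
  ext ⟨a, b⟩
  simp only [Finset.mem_filter, Finset.mem_product, Finset.mem_range]
  constructor
  · rintro ⟨⟨ha, hb⟩, h1, h2, h3⟩
    exact ⟨⟨by omega, by omega⟩, h1, h2, h3⟩
  · rintro ⟨⟨ha, hb⟩, h1, h2, h3⟩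
    have haN : a ≤ n := by
      by_contra hc
      have hn2 : n < 2 ^ a := lt_of_lt_of_le (by omega) (Nat.le_of_lt (Nat.lt_two_pow_self (n := a)))
      rw [Nat.testBit_eq_false_of_lt hn2] at h2
      simp at h2
    exact ⟨⟨by omega, by omega⟩, h1, h2, h3⟩

-- shift bijection
lemma shift_card (m N : ℕ) :
    (((Finset.range (N + 1) ×ˢ Finset.range (N + 1)).filter
      (fun p => 0 < p.2 ∧ p.2 < p.1 ∧ m.testBit p.1 = true ∧ m.testBit p.2 = false)).card)
    = ((Finset.range N ×ˢ Finset.range N).filter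
      (fun p => p.2 < p.1 ∧ (m / 2).testBit p.1 = true ∧ (m / 2).testBit p.2 = false)).card := by
  apply Finset.card_nbij' (i := fun p => (p.1 - 1, p.2 - 1)) (j := fun p => (p.1 + 1, p.2 + 1))
  · rintro ⟨a, b⟩ hm
    simp only [Finset.mem_coe, Finset.mem_filter, Finset.mem_product, Finset.mem_range] at hm ⊢
    obtain ⟨⟨ha, hb⟩, hb0, hlt, h1, h2⟩ := hm
    have ha0 : 0 < a := by omega
    have e1 : a = (a - 1) + 1 := by omega
    have e2 : b = (b - 1) + 1 := by omega
    rw [e1, Nat.testBit_add_one] at h1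
    rw [e2, Nat.testBit_add_one] at h2
    exact ⟨⟨by omega, by omega⟩, by omega, h1, h2⟩
  · rintro ⟨a, b⟩ hm
    simp only [Finset.mem_coe, Finset.mem_filter, Finset.mem_product, Finset.mem_range] at hm ⊢
    obtain ⟨⟨ha, hb⟩, hlt, h1, h2⟩ := hm
    rw [← Nat.testBit_add_one] at h1 h2
    exact ⟨⟨by omega, by omega⟩, by omega, by omega, h1, h2⟩
  · rintro ⟨a, b⟩ hm
    simp only [Finset.mem_coe, Finset.mem_filter, Finset.mem_product, Finset.mem_range] at hm
    obtain ⟨⟨ha, hb⟩, hb0, hlt, h1, h2⟩ := hm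
    simp only [Prod.mk.injEq]
    constructor <;> omega
  · rintro ⟨a, b⟩ _
    simp

lemma inv2_two_mul_add_one (n : ℕ) : inv2 (2 * n + 1) = inv2 n := by
  rw [inv2_eq_card (2 * n + 1) (2 * n + 2) (by omega)]
  have hbit0 : (2 * n + 1).testBit 0 = true := by
    simp [Nat.testBit_zero]
  have hset : ((Finset.range (2 * n + 2) ×ˢ Finset.range (2 * n + 2)).filter
      (fun p => p.2 < p.1 ∧ (2 * n + 1).testBit p.1 = true ∧ (2 * n + 1).testBit p.2 = false))
      = ((Finset.range (2 * n + 1 + 1) ×ˢ Finset.range (2 * n + 1 + 1)).filter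
      (fun p => 0 < p.2 ∧ p.2 < p.1 ∧ (2 * n + 1).testBit p.1 = true ∧
        (2 * n + 1).testBit p.2 = false)) := by
    ext ⟨a, b⟩
    simp only [Finset.mem_filter, Finset.mem_product, Finset.mem_range]
    constructor
    · rintro ⟨⟨ha, hb⟩, h1, h2, h3⟩
      have hb0 : 0 < b := by
        rcases Nat.eq_zero_or_pos b with rfl | h
        · rw [hbit0] at h3; simp at h3
        · exact h
      exact ⟨⟨by omega, by omega⟩, hb0, h1, h2, h3⟩
    · rintro ⟨⟨ha, hb⟩, hb0, h1, h2, h3⟩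
      exact ⟨⟨by omega, by omega⟩, h1, h2, h3⟩
  rw [hset, shift_card (2 * n + 1) (2 * n + 1)]
  have hdiv : (2 * n + 1) / 2 = n := by omega
  rw [hdiv, ← inv2_eq_card n (2 * n + 1) (by omega)]

lemma inv2_two_mul (n : ℕ) : inv2 (2 * n) = inv2 n + ones n := by
  rcases Nat.eq_zero_or_pos n with rfl | hn
  · simp [ones]
  rw [inv2_eq_card (2 * n) (2 * n + 1) (by omega)]
  set S := ((Finset.range (2 * n + 1) ×ˢ Finset.range (2 * n + 1)).filter
      (fun p => p.2 < p.1 ∧ (2 * n).testBit p.1 = true ∧ (2 * n).testBit p.2 = false)) with hS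
  have hsplit := Finset.card_filter_add_card_filter_not
    (s := S) (p := fun p => 0 < p.2)
  have hpos : (S.filter (fun p => 0 < p.2)).card = inv2 n := by
    have hset : S.filter (fun p => 0 < p.2)
        = ((Finset.range (2 * n + 1) ×ˢ Finset.range (2 * n + 1)).filter
          (fun p => 0 < p.2 ∧ p.2 < p.1 ∧ (2 * n).testBit p.1 = true ∧
            (2 * n).testBit p.2 = false)) := by
      rw [hS, Finset.filter_filter]
      apply Finset.filter_congr
      intro x _
      tauto
    rw [hset]
    have h2n : 2 * n + 1 = (2 * n) + 1 := rfl
    rw [shift_card (2 * n) (2 * n)]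
    have hdiv : (2 * n) / 2 = n := by omega
    rw [hdiv, ← inv2_eq_card n (2 * n) (by omega)]
  have hzero : (S.filter (fun p => ¬ 0 < p.2)).card = ones n := by
    rw [← card_testBit (2 * n) n
      (lt_of_lt_of_le (Nat.lt_two_pow_self (n := n)) (Nat.pow_le_pow_right (by omega) (by omega)))]
    apply Finset.card_nbij' (i := fun p => p.1 - 1) (j := fun c => (c + 1, 0))
    · rintro ⟨a, b⟩ hm
      simp only [hS, Finset.mem_coe, Finset.mem_filter, Finset.mem_product, Finset.mem_range] at hm
      obtain ⟨⟨⟨ha, hb⟩, hlt, h1, h2⟩, hb0⟩ := hm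
      have hb' : b = 0 := by omega
      have ha0 : 0 < a := by omega
      simp only [Finset.mem_coe, Finset.mem_filter, Finset.mem_range]
      have e1 : a = (a - 1) + 1 := by omega
      rw [e1, Nat.testBit_add_one] at h1
      have hdiv : (2 * n) / 2 = n := by omega
      rw [hdiv] at h1
      exact ⟨by omega, h1⟩
    · intro c hc
      simp only [Finset.mem_coe, Finset.mem_filter, Finset.mem_range] at hc
      obtain ⟨hc1, hc2⟩ := hc
      simp only [hS, Finset.mem_coe, Finset.mem_filter, Finset.mem_product, Finset.mem_range]
      have hb1 : (2 * n).testBit (c + 1) = true := by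
        rw [Nat.testBit_add_one]
        have hdiv : (2 * n) / 2 = n := by omega
        rw [hdiv]; exact hc2
      have hb2 : (2 * n).testBit 0 = false := by
        simp [Nat.testBit_zero]
      exact ⟨⟨⟨by omega, by omega⟩, by omega, hb1, hb2⟩, by omega⟩
    · rintro ⟨a, b⟩ hm
      simp only [hS, Finset.mem_coe, Finset.mem_filter, Finset.mem_product, Finset.mem_range] at hm
      obtain ⟨⟨⟨ha, hb⟩, hlt, h1, h2⟩, hb0⟩ := hm
      simp only [Prod.mk.injEq]
      constructor <;> omega
    · intro c _
      simp
  omega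

def tm (n : ℕ) : ℤ := (-1) ^ ones n

lemma tm_two_mul (n : ℕ) : tm (2 * n) = tm n := by unfold tm; rw [ones_two_mul]

lemma tm_two_mul_add_one (n : ℕ) : tm (2 * n + 1) = - tm n := by
  unfold tm; rw [ones_two_mul_add_one, pow_succ]; ring

lemma tm_mul_self (n : ℕ) : tm n * tm n = 1 := by
  unfold tm; rw [← pow_add]; exact Even.neg_one_pow ⟨ones n, rfl⟩

lemma tm_eq_or (n : ℕ) : tm n = 1 ∨ tm n = -1 := by
  rcases Nat.even_or_odd (ones n) with h | h
  · left; exact h.neg_one_pow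
  · right; exact h.neg_one_pow

lemma tm_ne_zero (n : ℕ) : tm n ≠ 0 := by
  rcases tm_eq_or n with h | h <;> rw [h] <;> norm_num

lemma iSeq_ne_zero (n : ℕ) : iSeq n ≠ 0 := by
  unfold iSeq; exact pow_ne_zero _ (by norm_num)

lemma iSeq_two_mul (n : ℕ) : iSeq (2 * n) = iSeq n * tm n := by
  unfold iSeq tm; rw [inv2_two_mul, pow_add]

lemma iSeq_two_mul_add_one (n : ℕ) : iSeq (2 * n + 1) = iSeq n := by
  unfold iSeq; rw [inv2_two_mul_add_one]

lemma iSeq_four_mul (s : ℕ) : iSeq (4 * s) = iSeq s := by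
  rw [show 4 * s = 2 * (2 * s) by ring, iSeq_two_mul, tm_two_mul, iSeq_two_mul]
  linear_combination iSeq s * tm_mul_self s

/-- Master lemma: the successor of `iSeq` is determined by `tm`. -/
lemma master (n : ℕ) : (tm n = -1 → iSeq (n + 1) = - iSeq n) ∧
    (tm n = 1 → iSeq (n + 1) = - iSeq n * tm (n + 1)) := by
  induction n using Nat.strong_induction_on with
  | _ n ih =>
  rcases Nat.even_or_odd n with ⟨q, hq⟩ | ⟨q, hq⟩
  · obtain rfl : n = 2 * q := by omega
    constructor
    · intro h
      have h' : tm q = -1 := by rwa [tm_two_mul] at h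
      show iSeq (2 * q + 1) = - iSeq (2 * q)
      rw [iSeq_two_mul_add_one, iSeq_two_mul, h']; ring
    · intro h
      have h' : tm q = 1 := by rwa [tm_two_mul] at h
      show iSeq (2 * q + 1) = - iSeq (2 * q) * tm (2 * q + 1)
      rw [iSeq_two_mul_add_one, iSeq_two_mul, tm_two_mul_add_one, h']; ring
  · obtain rfl : n = 2 * q + 1 := by omega
    obtain ⟨ih1, ih2⟩ := ih q (by omega)
    constructor
    · intro h
      have h' : tm q = 1 := by rw [tm_two_mul_add_one] at h; linarith
      show iSeq (2 * q + 1 + 1) = - iSeq (2 * q + 1)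
      rw [show 2 * q + 1 + 1 = 2 * (q + 1) by ring, iSeq_two_mul, iSeq_two_mul_add_one,
        ih2 h']
      linear_combination (- iSeq q) * tm_mul_self (q + 1)
    · intro h
      have h' : tm q = -1 := by rw [tm_two_mul_add_one] at h; linarith
      show iSeq (2 * q + 1 + 1) = - iSeq (2 * q + 1) * tm (2 * q + 1 + 1)
      rw [show 2 * q + 1 + 1 = 2 * (q + 1) by ring, iSeq_two_mul, iSeq_two_mul_add_one,
        tm_two_mul, ih1 h']

lemma noPair (n : ℕ) : ¬ (iSeq (n + 1) = iSeq n ∧ tm (n + 1) = tm n) := by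
  rintro ⟨hA, hT⟩
  obtain ⟨m1, m2⟩ := master n
  rcases tm_eq_or n with h | h
  · have e := m2 h
    rw [hA, hT, h, mul_one] at e
    exact iSeq_ne_zero n (by linarith)
  · have e := m1 h
    rw [hA] at e
    exact iSeq_ne_zero n (by linarith)

lemma noTTT (s : ℕ) : ¬ (tm (s + 1) = tm s ∧ tm (s + 2) = tm (s + 1)) := by
  rcases Nat.even_or_odd s with ⟨u, hu⟩ | ⟨u, hu⟩
  · obtain rfl : s = 2 * u := by omega
    rintro ⟨h1, -⟩
    rw [tm_two_mul_add_one, tm_two_mul] at h1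
    exact tm_ne_zero u (by linarith)
  · obtain rfl : s = 2 * u + 1 := by omega
    rintro ⟨-, h2⟩
    rw [show 2 * u + 1 + 2 = 2 * (u + 1) + 1 by ring,
      show 2 * u + 1 + 1 = 2 * (u + 1) by ring, tm_two_mul_add_one, tm_two_mul] at h2
    exact tm_ne_zero (u + 1) (by linarith)

lemma noAAA (n : ℕ) : ¬ (iSeq (n + 1) = iSeq n ∧ iSeq (n + 2) = iSeq (n + 1)) := by
  rintro ⟨h1, h2⟩
  obtain ⟨m1, m2⟩ := master n
  rcases tm_eq_or n with h | h
  · have e := m2 h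
    have ht : tm (n + 1) = -1 := by
      rcases tm_eq_or (n + 1) with h' | h'
      · rw [h', mul_one, h1] at e
        exact absurd e (by intro hh; exact iSeq_ne_zero n (by linarith))
      · exact h'
    have e2 := (master (n + 1)).1 ht
    rw [show n + 1 + 1 = n + 2 by ring, h2] at e2
    exact iSeq_ne_zero (n + 1) (by linarith)
  · have e := m1 h
    rw [h1] at e
    exact iSeq_ne_zero n (by linarith)

/-- no simultaneous repetition of `iSeq` and `tm` of period `k` over a window of `2k-1`. -/
lemma NR : ∀ k, 1 ≤ k → ∀ p,
    ¬ (∀ r, p ≤ r → r < p + (2 * k - 1) → iSeq (r + k) = iSeq r ∧ tm (r + k) = tm r) := by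
  intro k
  induction k using Nat.strong_induction_on with
  | _ k ih =>
  intro hk p hH
  rcases Nat.even_or_odd k with ⟨k', hk'⟩ | ⟨j, hj⟩
  · obtain rfl : k = 2 * k' := by omega
    have hk'1 : 1 ≤ k' := by omega
    apply ih k' (by omega) hk'1 ((p + 1) / 2)
    intro r hr1 hr2
    obtain ⟨hA, hT⟩ := hH (2 * r + 1) (by omega) (by omega)
    rw [show 2 * r + 1 + 2 * k' = 2 * (r + k') + 1 by ring, iSeq_two_mul_add_one,
      iSeq_two_mul_add_one] at hA
    rw [show 2 * r + 1 + 2 * k' = 2 * (r + k') + 1 by ring, tm_two_mul_add_one,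
      tm_two_mul_add_one] at hT
    exact ⟨hA, by linarith⟩
  · obtain rfl : k = 2 * j + 1 := by omega
    rcases Nat.eq_zero_or_pos j with rfl | hj1
    · have h := hH p le_rfl (by omega)
      exact noPair p ⟨by simpa using h.1, by simpa using h.2⟩
    · obtain ⟨r0, hr0a, hr0b⟩ : ∃ r0, p ≤ 2 * r0 ∧ 2 * r0 ≤ p + 1 :=
        ⟨(p + 1) / 2, by omega, by omega⟩
      have h0 := (hH (2 * r0) (by omega) (by omega)).2
      have h1 := (hH (2 * r0 + 1) (by omega) (by omega)).2
      have h2 := (hH (2 * r0 + 2) (by omega) (by omega)).2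
      have h3 := (hH (2 * r0 + 3) (by omega) (by omega)).2
      rw [show 2 * r0 + (2 * j + 1) = 2 * (r0 + j) + 1 by ring, tm_two_mul_add_one,
        tm_two_mul] at h0
      rw [show 2 * r0 + 1 + (2 * j + 1) = 2 * (r0 + j + 1) by ring, tm_two_mul,
        tm_two_mul_add_one] at h1
      rw [show 2 * r0 + 2 + (2 * j + 1) = 2 * (r0 + j + 1) + 1 by ring, tm_two_mul_add_one,
        show 2 * r0 + 2 = 2 * (r0 + 1) by ring, tm_two_mul] at h2
      rw [show 2 * r0 + 3 + (2 * j + 1) = 2 * (r0 + j + 2) by ring, tm_two_mul,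
        show 2 * r0 + 3 = 2 * (r0 + 1) + 1 by ring, tm_two_mul_add_one] at h3
      exact noTTT (r0 + j) ⟨by linarith, by linarith⟩

/-- case ℓ = 4i+1 : two consecutive `m ≡ 0,1 (mod 4)` force `tm r = -1`. -/
lemma stepA (i r : ℕ)
    (h0 : iSeq (4 * r + (2 * (2 * i) + 1)) = iSeq (4 * r))
    (h1 : iSeq (4 * r + 1 + (2 * (2 * i) + 1)) = iSeq (4 * r + 1)) : tm r = -1 := by
  rw [show 4 * r + (2 * (2 * i) + 1) = 2 * (2 * (r + i)) + 1 by ring, iSeq_two_mul_add_one,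
    iSeq_two_mul, iSeq_four_mul] at h0
  rw [show 4 * r + 1 + (2 * (2 * i) + 1) = 2 * (2 * (r + i) + 1) by ring, iSeq_two_mul,
    iSeq_two_mul_add_one, tm_two_mul_add_one, show (4 * r + 1 : ℕ) = 2 * (2 * r) + 1 by ring,
    iSeq_two_mul_add_one, iSeq_two_mul] at h1
  have key : - iSeq r = iSeq r * tm r := by linear_combination h0 + h1
  rcases tm_eq_or r with h | h
  · rw [h, mul_one] at key
    exact absurd (by linarith : iSeq r = 0) (iSeq_ne_zero r)
  · exact h

/-- case ℓ = 4i+1 : δ'' relation. -/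
lemma stepA2 (i r : ℕ)
    (h3 : iSeq (4 * r + 3 + (2 * (2 * i) + 1)) = iSeq (4 * r + 3)) :
    iSeq (r + i + 1) = iSeq r := by
  rw [show 4 * r + 3 + (2 * (2 * i) + 1) = 4 * (r + i + 1) by ring, iSeq_four_mul,
    show (4 * r + 3 : ℕ) = 2 * (2 * r + 1) + 1 by ring, iSeq_two_mul_add_one,
    iSeq_two_mul_add_one] at h3
  exact h3

/-- case ℓ = 4i+1 : β'' relation at r+1. -/
lemma stepA3 (i r : ℕ)
    (h6 : iSeq (4 * (r + 1) + 2 + (2 * (2 * i) + 1)) = iSeq (4 * (r + 1) + 2)) :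
    iSeq (r + i + 1) = iSeq (r + 1) * - tm (r + 1) := by
  rw [show 4 * (r + 1) + 2 + (2 * (2 * i) + 1) = 2 * (2 * (r + i + 1) + 1) + 1 by ring,
    iSeq_two_mul_add_one, iSeq_two_mul_add_one,
    show (4 * (r + 1) + 2 : ℕ) = 2 * (2 * (r + 1) + 1) by ring, iSeq_two_mul,
    iSeq_two_mul_add_one, tm_two_mul_add_one] at h6
  exact h6

/-- case ℓ = 4i+3 : two consecutive `m ≡ 2,3 (mod 4)` force `tm r = 1`. -/
lemma stepC (i r : ℕ)
    (h2 : iSeq (4 * r + 2 + (2 * (2 * i + 1) + 1)) = iSeq (4 * r + 2))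
    (h3 : iSeq (4 * r + 3 + (2 * (2 * i + 1) + 1)) = iSeq (4 * r + 3)) : tm r = 1 := by
  rw [show 4 * r + 2 + (2 * (2 * i + 1) + 1) = 2 * (2 * (r + i + 1)) + 1 by ring,
    iSeq_two_mul_add_one, iSeq_two_mul, show (4 * r + 2 : ℕ) = 2 * (2 * r + 1) by ring,
    iSeq_two_mul, iSeq_two_mul_add_one, tm_two_mul_add_one] at h2
  rw [show 4 * r + 3 + (2 * (2 * i + 1) + 1) = 2 * (2 * (r + i + 1) + 1) by ring,
    iSeq_two_mul, iSeq_two_mul_add_one, tm_two_mul_add_one,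
    show (4 * r + 3 : ℕ) = 2 * (2 * r + 1) + 1 by ring, iSeq_two_mul_add_one,
    iSeq_two_mul_add_one] at h3
  have key : iSeq r * tm r = iSeq r := by linear_combination h2 + h3
  rcases tm_eq_or r with h | h
  · exact h
  · rw [h] at key
    exact absurd (by linarith : iSeq r = 0) (iSeq_ne_zero r)

/-- case ℓ = 4i+3 : γ relation. -/
lemma stepC2 (i r : ℕ)
    (h1 : iSeq (4 * r + 1 + (2 * (2 * i + 1) + 1)) = iSeq (4 * r + 1)) :
    iSeq (r + i + 1) = iSeq r * tm r := by
  rw [show 4 * r + 1 + (2 * (2 * i + 1) + 1) = 4 * (r + i + 1) by ring, iSeq_four_mul,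
    show (4 * r + 1 : ℕ) = 2 * (2 * r) + 1 by ring, iSeq_two_mul_add_one, iSeq_two_mul] at h1
  exact h1

/-- case ℓ = 4i+3 : α relation at r+1. -/
lemma stepC3 (i r : ℕ)
    (h4 : iSeq (4 * (r + 1) + (2 * (2 * i + 1) + 1)) = iSeq (4 * (r + 1))) :
    iSeq (r + i + 1) = iSeq (r + 1) := by
  rw [show 4 * (r + 1) + (2 * (2 * i + 1) + 1) = 2 * (2 * (r + i + 1) + 1) + 1 by ring,
    iSeq_two_mul_add_one, iSeq_two_mul_add_one, iSeq_four_mul] at h4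
  exact h4

theorem cube_periods (ℓ : ℕ) (hℓ : 1 ≤ ℓ) :
    (∃ p : ℕ, ∀ j < 2 * ℓ, iSeq (p + j + ℓ) = iSeq (p + j)) ↔ ℓ = 3 := by
  constructor
  · rintro ⟨p, hp⟩
    have H : ∀ m, p ≤ m → m < p + 2 * ℓ → iSeq (m + ℓ) = iSeq m := by
      intro m h1 h2
      have h := hp (m - p) (by omega)
      rw [show p + (m - p) = m by omega] at h
      exact h
    by_contra hne
    rcases Nat.even_or_odd ℓ with ⟨k, hk⟩ | ⟨j, hj⟩
    · -- ℓ = 2k even : impossible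
      obtain rfl : ℓ = 2 * k := by omega
      obtain ⟨q0, hq0a, hq0b⟩ : ∃ q0, p ≤ 2 * q0 ∧ 2 * q0 ≤ p + 1 :=
        ⟨(p + 1) / 2, by omega, by omega⟩
      apply NR k (by omega) q0
      intro r hr1 hr2
      have hodd := H (2 * r + 1) (by omega) (by omega)
      have heven := H (2 * r) (by omega) (by omega)
      rw [show 2 * r + 1 + 2 * k = 2 * (r + k) + 1 by ring, iSeq_two_mul_add_one,
        iSeq_two_mul_add_one] at hodd
      rw [show 2 * r + 2 * k = 2 * (r + k) by ring, iSeq_two_mul, iSeq_two_mul] at heven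
      refine ⟨hodd, ?_⟩
      rw [hodd] at heven
      exact mul_left_cancel₀ (iSeq_ne_zero r) heven
    · obtain rfl : ℓ = 2 * j + 1 := by omega
      rcases Nat.eq_zero_or_pos j with rfl | hj1
      · -- ℓ = 1 : impossible
        exact noAAA p ⟨by simpa using H p le_rfl (by omega),
          by simpa using H (p + 1) (by omega) (by omega)⟩
      obtain ⟨r, hra, hrb⟩ : ∃ r, p ≤ 4 * r ∧ 4 * r ≤ p + 3 :=
        ⟨(p + 3) / 4, by omega, by omega⟩
      rcases Nat.even_or_odd j with ⟨i, hi⟩ | ⟨i, hi⟩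
      · -- ℓ = 4i+1, i ≥ 1 : impossible
        obtain rfl : j = 2 * i := by omega
        have hi1 : 1 ≤ i := by omega
        have hT0 : tm r = -1 :=
          stepA i r (H (4 * r) (by omega) (by omega)) (H (4 * r + 1) (by omega) (by omega))
        have hT1 : tm (r + 1) = -1 :=
          stepA i (r + 1) (H (4 * (r + 1)) (by omega) (by omega))
            (H (4 * (r + 1) + 1) (by omega) (by omega))
        have hd : iSeq (r + i + 1) = iSeq r :=
          stepA2 i r (H (4 * r + 3) (by omega) (by omega))
        have hb : iSeq (r + i + 1) = iSeq (r + 1) * - tm (r + 1) :=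
          stepA3 i r (H (4 * (r + 1) + 2) (by omega) (by omega))
        rw [hT1] at hb
        exact noPair r ⟨by rw [← hd, hb]; ring, by rw [hT0, hT1]⟩
      · -- ℓ = 4i+3 : forces i = 0, i.e. ℓ = 3
        obtain rfl : j = 2 * i + 1 := by omega
        rcases Nat.eq_zero_or_pos i with rfl | hi1
        · exact hne rfl
        have hT0 : tm r = 1 :=
          stepC i r (H (4 * r + 2) (by omega) (by omega)) (H (4 * r + 3) (by omega) (by omega))
        have hT1 : tm (r + 1) = 1 :=
          stepC i (r + 1) (H (4 * (r + 1) + 2) (by omega) (by omega))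
            (H (4 * (r + 1) + 3) (by omega) (by omega))
        have hg : iSeq (r + i + 1) = iSeq r * tm r :=
          stepC2 i r (H (4 * r + 1) (by omega) (by omega))
        have ha : iSeq (r + i + 1) = iSeq (r + 1) :=
          stepC3 i r (H (4 * (r + 1)) (by omega) (by omega))
        rw [hT0, mul_one] at hg
        exact noPair r ⟨by rw [← ha, hg], by rw [hT0, hT1]⟩
  · rintro rfl
    exact ⟨0, by decide⟩
end
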